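/- (Combined k-Clique constraint Hamiltonian.) Fix n, m : ℕ with n < 2^m, a simple graph G on Fin n with decidable adjacency, and k : ℕ with k ≤ n. Let C_cliques be the product over all pairs of distinct non-adjacent vertices i ≠ j of (1 − P_{ij}), where P_{ij} is the diagonal matrix on ℂ^(Fin n → Bool) whose (z,z) entry is 1 iff z i = true and z j = true. Let π be the bijection on (Fin n → Bool) × ZMod (2^m) sending (z,y) to (z, y + w_H(z)), D_H its permutation matrix, and P_k the diagonal matrix with entry 1 at indices (z,a) with a = (k : ZMod (2^m)). Define C := (D_Hᴴ * P_k * D_H) * (C_cliques ⊗ 1), where ⊗ is the Kronecker product with the identity on ℂ^(ZMod (2^m)). Then for every z : Fin n → Bool: C *ᵥ e_{(z,0)} = e_{(z,0)} if {i | z i = true} is a clique in G of cardinality k, and C *ᵥ e_{(z,0)} = 0 otherwise. -/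

import Mathlib

open Matrix Kronecker

theorem kclique_constraint_hamiltonian (n m : ℕ) (hnm : n < 2 ^ m)
    (G : SimpleGraph (Fin n)) [DecidableRel G.Adj] (k : ℕ) (hk : k ≤ n) :
    let P : Fin n × Fin n → Matrix (Fin n → Bool) (Fin n → Bool) ℂ := fun p =>
      Matrix.diagonal (fun z => if z p.1 = true ∧ z p.2 = true then 1 else 0)
    let pairs : Finset (Fin n × Fin n) :=
      Finset.univ.filter (fun p : Fin n × Fin n => p.1 < p.2 ∧ ¬ G.Adj p.1 p.2)
    let Ccliques : Matrix (Fin n → Bool) (Fin n → Bool) ℂ :=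
      pairs.noncommProd (fun p => 1 - P p) (by
        intro a _ b _ _
        exact (Commute.one_left _).sub_left ((Commute.one_right _).sub_right
          (by
            show _ * _ = _ * _
            try dsimp only
            rw [Matrix.diagonal_mul_diagonal, Matrix.diagonal_mul_diagonal]
            exact congrArg Matrix.diagonal (funext fun i => mul_comm _ _))))
    let wH : (Fin n → Bool) → ℕ := fun z => (Finset.univ.filter (fun i => z i = true)).card
    let π : ((Fin n → Bool) × ZMod (2 ^ m)) → ((Fin n → Bool) × ZMod (2 ^ m)) :=
      fun p => (p.1, p.2 + (wH p.1 : ZMod (2 ^ m)))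
    let DH : Matrix ((Fin n → Bool) × ZMod (2 ^ m)) ((Fin n → Bool) × ZMod (2 ^ m)) ℂ :=
      Matrix.of (fun x y => if x = π y then 1 else 0)
    let Pk : Matrix ((Fin n → Bool) × ZMod (2 ^ m)) ((Fin n → Bool) × ZMod (2 ^ m)) ℂ :=
      Matrix.diagonal (fun p => if p.2 = (k : ZMod (2 ^ m)) then 1 else 0)
    let C : Matrix ((Fin n → Bool) × ZMod (2 ^ m)) ((Fin n → Bool) × ZMod (2 ^ m)) ℂ :=
      (DHᴴ * Pk * DH) * (Ccliques ⊗ₖ (1 : Matrix (ZMod (2 ^ m)) (ZMod (2 ^ m)) ℂ))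
    ∀ z : Fin n → Bool,
      ((G.IsClique {i : Fin n | z i = true} ∧ wH z = k) →
        C *ᵥ (Pi.single (z, 0) 1 : ((Fin n → Bool) × ZMod (2 ^ m)) → ℂ) =
          Pi.single (z, 0) 1) ∧
      (¬ (G.IsClique {i : Fin n | z i = true} ∧ wH z = k) →
        C *ᵥ (Pi.single (z, 0) 1 : ((Fin n → Bool) × ZMod (2 ^ m)) → ℂ) = 0) := by
  intro P pairs Ccliques wH π DH Pk C z
  classical
  -- the diagonal function underlying 1 - P p
  set g : (Fin n × Fin n) → ((Fin n → Bool) → ℂ) :=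
    fun p w => if ¬(w p.1 = true ∧ w p.2 = true) then (1:ℂ) else 0 with hg_def
  have hgcomm : (↑pairs : Set (Fin n × Fin n)).Pairwise (Function.onFun Commute g) :=
    fun a _ b _ _ => Commute.all _ _
  have hdcomm : (↑pairs : Set (Fin n × Fin n)).Pairwise
      (Function.onFun Commute fun p => (Matrix.diagonalRingHom (Fin n → Bool) ℂ) (g p)) := by
    intro a _ b _ _
    show Matrix.diagonal (g a) * Matrix.diagonal (g b) = Matrix.diagonal (g b) * Matrix.diagonal (g a)
    rw [Matrix.diagonal_mul_diagonal, Matrix.diagonal_mul_diagonal]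
    exact congrArg Matrix.diagonal (funext fun i => mul_comm _ _)
  -- Ccliques is diagonal
  have hCc : Ccliques = Matrix.diagonal
      (fun w => if ∀ p ∈ pairs, ¬(w p.1 = true ∧ w p.2 = true) then (1:ℂ) else 0) := by
    have h1 : Ccliques = pairs.noncommProd
        (fun p => (Matrix.diagonalRingHom (Fin n → Bool) ℂ) (g p)) hdcomm := by
      refine Finset.noncommProd_congr rfl (fun p _ => ?_) _
      show (1 : Matrix (Fin n → Bool) (Fin n → Bool) ℂ) - P p = Matrix.diagonal (g p)
      rw [← Matrix.diagonal_one, Matrix.diagonal_sub]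
      refine congrArg Matrix.diagonal (funext fun w => ?_)
      show 1 - (if w p.1 = true ∧ w p.2 = true then (1:ℂ) else 0) = g p w
      by_cases h : w p.1 = true ∧ w p.2 = true
      · rw [if_pos h, hg_def]
        simp [h]
      · rw [if_neg h, hg_def]
        simp only
        rw [if_pos h]
        norm_num
    rw [h1, ← Finset.map_noncommProd pairs g hgcomm (Matrix.diagonalRingHom (Fin n → Bool) ℂ),
      Finset.noncommProd_eq_prod]
    show Matrix.diagonal (∏ p ∈ pairs, g p) = _
    refine congrArg Matrix.diagonal (funext fun w => ?_)
    rw [Finset.prod_apply]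
    simpa [hg_def] using (Finset.prod_boole
      (p := fun p : Fin n × Fin n => ¬(w p.1 = true ∧ w p.2 = true)) (s := pairs))
  -- Kronecker product is diagonal
  have hKron : Ccliques ⊗ₖ (1 : Matrix (ZMod (2 ^ m)) (ZMod (2 ^ m)) ℂ) =
      Matrix.diagonal (fun q : (Fin n → Bool) × ZMod (2 ^ m) =>
        if ∀ p ∈ pairs, ¬(q.1 p.1 = true ∧ q.1 p.2 = true) then (1:ℂ) else 0) := by
    rw [hCc, ← Matrix.diagonal_one, Matrix.diagonal_kronecker_diagonal]
    simp
  -- π is injective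
  have hπinj : Function.Injective π := by
    rintro ⟨a1, a2⟩ ⟨b1, b2⟩ h
    have h1 : a1 = b1 := congrArg Prod.fst h
    have h2 : a2 + (wH a1 : ZMod (2 ^ m)) = b2 + (wH b1 : ZMod (2 ^ m)) := congrArg Prod.snd h
    subst h1
    exact Prod.ext rfl (by exact add_right_cancel h2)
  -- action of DH and DHᴴ on basis vectors
  have hDH : ∀ (x : (Fin n → Bool) × ZMod (2 ^ m)) (c : ℂ),
      DH *ᵥ Pi.single x c = Pi.single (π x) c := by
    intro x c
    funext i
    rw [Matrix.mulVec_single]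
    by_cases h : i = π x <;> simp [DH, h, Pi.single_apply]
  have hDHH : ∀ (x : (Fin n → Bool) × ZMod (2 ^ m)) (c : ℂ),
      DHᴴ *ᵥ Pi.single (π x) c = Pi.single x c := by
    intro x c
    funext i
    rw [Matrix.mulVec_single]
    by_cases h : i = x
    · simp [DH, Matrix.conjTranspose_apply, h, Pi.single_apply]
    · have : π x ≠ π i := fun hc => h (hπinj hc).symm
      simp [DH, Matrix.conjTranspose_apply, this, Pi.single_apply, h]
  -- main computation
  have hmain : C *ᵥ (Pi.single (z, 0) 1 : ((Fin n → Bool) × ZMod (2 ^ m)) → ℂ) =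
      Pi.single (z, 0) ((if ((wH z : ZMod (2 ^ m)) = (k : ZMod (2 ^ m))) then (1:ℂ) else 0) *
        ((if ∀ p ∈ pairs, ¬(z p.1 = true ∧ z p.2 = true) then (1:ℂ) else 0) * 1)) := by
    have hπz : π (z, 0) = (z, (wH z : ZMod (2 ^ m))) := by
      show (z, 0 + (wH z : ZMod (2 ^ m))) = _
      rw [zero_add]
    show ((DHᴴ * Pk * DH) * (Ccliques ⊗ₖ _)) *ᵥ _ = _
    rw [← Matrix.mulVec_mulVec, ← Matrix.mulVec_mulVec, ← Matrix.mulVec_mulVec,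
      hKron, Matrix.diagonal_mulVec_single, hDH (z, 0), Matrix.diagonal_mulVec_single,
      hDHH (z, 0)]
    rw [hπz]
  -- relating the clique condition
  have hcliff : (∀ p ∈ pairs, ¬(z p.1 = true ∧ z p.2 = true)) ↔
      G.IsClique {i : Fin n | z i = true} := by
    constructor
    · intro h i hi j hj hij
      rcases lt_or_gt_of_ne hij with hlt | hlt
      · by_contra hadj
        exact h (i, j) (by
          simp only [pairs, Finset.mem_filter, Finset.mem_univ, true_and]
          exact ⟨hlt, hadj⟩) ⟨hi, hj⟩
      · by_contra hadj
        exact h (j, i) (by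
          simp only [pairs, Finset.mem_filter, Finset.mem_univ, true_and]
          exact ⟨hlt, fun a => hadj (G.adj_symm a)⟩) ⟨hj, hi⟩
    · rintro hcl p hp ⟨h1, h2⟩
      simp only [pairs, Finset.mem_filter, Finset.mem_univ, true_and] at hp
      exact hp.2 (hcl h1 h2 (ne_of_lt hp.1))
  -- relating the weight condition
  have hwiff : ((wH z : ZMod (2 ^ m)) = (k : ZMod (2 ^ m))) ↔ wH z = k := by
    have hw : wH z < 2 ^ m := lt_of_le_of_lt
      (le_trans (Finset.card_filter_le _ _) (by simp)) hnm
    rw [ZMod.natCast_eq_natCast_iff', Nat.mod_eq_of_lt hw,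
      Nat.mod_eq_of_lt (lt_of_le_of_lt hk hnm)]
  constructor
  · rintro ⟨hcl, hw⟩
    rw [hmain, if_pos (hwiff.mpr hw), if_pos (hcliff.mpr hcl)]
    norm_num
  · intro hne
    rw [hmain]
    rcases not_and_or.mp hne with h | h
    · rw [if_neg (fun hc => h (hcliff.mp hc))]
      simp
    · rw [if_neg (fun hc => h (hwiff.mp hc))]
      simp
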